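/- Let ℰ be a coarse structure, A a unital ℰ-filtered C*-algebra, 0 < ε < 1/12, and E ∈ ℰ. Let u be an ε-E-unitary in A. Then there is a continuous path (w_t)_{t∈[0,1]} in M₂(A) with w₀ = diag(u, u*) and w₁ = I₂ (the identity matrix), such that for every t ∈ [0,1], all entries of w_t lie in A_{E+E} and ‖w_t* w_t − 1‖ < 3ε and ‖w_t w_t* − 1‖ < 3ε; that is, diag(u, u*) and I₂ are homotopic as 3ε-2E-unitaries in M₂(A). -/

import Mathlib

/-- The (unique) C*-norm of a square matrix over a C*-algebra `A`: the operator norm of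
the matrix acting on the Hilbert `A`-module `Aⁿ`. -/
noncomputable def matCNorm {A : Type*} [CStarAlgebra A] {n : ℕ}
    (x : Matrix (Fin n) (Fin n) A) : ℝ :=
  sSup {t : ℝ | ∃ v : Fin n → A, ‖∑ j, star (v j) * v j‖ ≤ 1 ∧
    t = Real.sqrt ‖∑ j, star (x.mulVec v j) * x.mulVec v j‖}

/-- An `ℰ`-filtered (unital) C*-algebra structure on `A`: a family of closed linear
subspaces `F E`, monotone in `E`, stable under the involution, satisfying
`F E * F E' ⊆ F (E + E')`, with dense union, and with `1 ∈ F E` for all `E`. -/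
structure CoarseFiltration (ℰ : Type*) [AddCommSemigroup ℰ] [Lattice ℰ]
    (A : Type*) [CStarAlgebra A] where
  F : ℰ → Submodule ℂ A
  closed : ∀ E, IsClosed (F E : Set A)
  mono : ∀ ⦃E E' : ℰ⦄, E ≤ E' → F E ≤ F E'
  star_mem : ∀ E : ℰ, ∀ a ∈ F E, star a ∈ F E
  mul_mem : ∀ E E' : ℰ, ∀ a b : A, a ∈ F E → b ∈ F E' → a * b ∈ F (E + E')
  dense_union : Dense (⋃ E : ℰ, (F E : Set A))
  one_mem : ∀ E : ℰ, (1 : A) ∈ F E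

namespace Stmt8Aux

open WithCStarModule
open scoped Matrix ComplexConjugate

attribute [local instance] CStarAlgebra.spectralOrder CStarAlgebra.spectralOrderedRing

variable {A : Type*} [CStarAlgebra A] {n : ℕ}

/-- `mulVec` by a matrix as a continuous linear map on the C*-module `Aⁿ`. -/
noncomputable def toCLM (x : Matrix (Fin n) (Fin n) A) :
    C⋆ᵐᵒᵈ(A, Fin n → A) →L[ℂ] C⋆ᵐᵒᵈ(A, Fin n → A) :=
  LinearMap.mkContinuous
    { toFun := fun v => (linearEquiv ℂ A (Fin n → A)).symm
        (star (x.mulVec (star (linearEquiv ℂ A (Fin n → A) v))))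
      map_add' := fun v w => by
        simp only [map_add, star_add]
        rw [Matrix.mulVec_add, star_add, map_add]
      map_smul' := fun c v => by
        simp only [map_smul, RingHom.id_apply]
        rw [← map_smul]
        congr 1
        funext j
        simp [Matrix.mulVec, dotProduct, Finset.smul_sum, mul_smul_comm, star_sum,
          star_mul, smul_mul_assoc] }
    (∑ i, ∑ j, ‖x i j‖)
    (by
      intro v
      simp only [LinearMap.coe_mk, AddHom.coe_mk]
      calc ‖(linearEquiv ℂ A (Fin n → A)).symm
            (star (x.mulVec (star (linearEquiv ℂ A (Fin n → A) v))))‖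
          ≤ ∑ i, ‖x.mulVec (star (linearEquiv ℂ A (Fin n → A) v)) i‖ := by
            refine (pi_norm_le_sum_norm (A := A) _).trans (le_of_eq ?_)
            exact Finset.sum_congr rfl fun i _ => norm_star _
        _ ≤ ∑ i, ∑ j, ‖x i j‖ * ‖v‖ := by
            refine Finset.sum_le_sum fun i _ => ?_
            calc ‖x.mulVec (star (linearEquiv ℂ A (Fin n → A) v)) i‖
                = ‖∑ j, x i j * (star (linearEquiv ℂ A (Fin n → A) v)) j‖ := by
                  simp [Matrix.mulVec, dotProduct]
              _ ≤ ∑ j, ‖x i j * (star (linearEquiv ℂ A (Fin n → A) v)) j‖ := norm_sum_le _ _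
              _ ≤ ∑ j, ‖x i j‖ * ‖v‖ := by
                  refine Finset.sum_le_sum fun j _ => ?_
                  refine (norm_mul_le _ _).trans ?_
                  refine mul_le_mul_of_nonneg_left ?_ (norm_nonneg _)
                  rw [Pi.star_apply, norm_star]
                  exact norm_apply_le_norm (A := A) v j
        _ = (∑ i, ∑ j, ‖x i j‖) * ‖v‖ := by
            rw [Finset.sum_mul]
            exact Finset.sum_congr rfl fun i _ => (Finset.sum_mul _ _ _).symm)

lemma toCLM_apply (x : Matrix (Fin n) (Fin n) A) (v : C⋆ᵐᵒᵈ(A, Fin n → A)) :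
    toCLM x v = (linearEquiv ℂ A (Fin n → A)).symm
      (star (x.mulVec (star (linearEquiv ℂ A (Fin n → A) v)))) := rfl

lemma norm_symm_eq (v : Fin n → A) :
    ‖(linearEquiv ℂ A (Fin n → A)).symm (star v)‖ =
      Real.sqrt ‖∑ j, star (v j) * v j‖ := by
  rw [pi_norm]
  congr 2
  refine Finset.sum_congr rfl fun j _ => ?_
  rw [inner_def]
  show star (v j) * star (star (v j)) = _
  rw [star_star]

lemma norm_eq_star (b : C⋆ᵐᵒᵈ(A, Fin n → A)) :
    ‖b‖ = Real.sqrt ‖∑ j, star ((star (linearEquiv ℂ A (Fin n → A) b)) j) *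
      (star (linearEquiv ℂ A (Fin n → A) b)) j‖ := by
  rw [← norm_symm_eq, star_star, LinearEquiv.symm_apply_apply]

lemma matCNorm_eq_opNorm (x : Matrix (Fin n) (Fin n) A) :
    matCNorm x = ‖toCLM x‖ := by
  rw [← (toCLM x).sSup_unitClosedBall_eq_norm]
  unfold matCNorm
  congr 1
  ext t
  constructor
  · rintro ⟨v, hv, rfl⟩
    refine ⟨(linearEquiv ℂ A (Fin n → A)).symm (star v), ?_, ?_⟩
    · rw [Metric.mem_closedBall, dist_zero_right, norm_symm_eq]
      exact Real.sqrt_le_one.mpr hv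
    · show ‖toCLM x ((linearEquiv ℂ A (Fin n → A)).symm (star v))‖ = _
      rw [toCLM_apply]
      simp only [LinearEquiv.apply_symm_apply, star_star]
      exact norm_symm_eq _
  · rintro ⟨b, hb, rfl⟩
    rw [Metric.mem_closedBall, dist_zero_right] at hb
    refine ⟨star (linearEquiv ℂ A (Fin n → A) b), ?_, ?_⟩
    · rw [norm_eq_star] at hb
      exact Real.sqrt_le_one.mp hb
    · show ‖toCLM x b‖ = _
      exact norm_symm_eq _

lemma matCNorm_nonneg (x : Matrix (Fin n) (Fin n) A) : 0 ≤ matCNorm x := by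
  rw [matCNorm_eq_opNorm]; exact norm_nonneg (toCLM x)

lemma matCNorm_add_le (x y : Matrix (Fin n) (Fin n) A) :
    matCNorm (x + y) ≤ matCNorm x + matCNorm y := by
  simp only [matCNorm_eq_opNorm]
  have : toCLM (x + y) = toCLM x + toCLM y := by
    ext b
    simp [toCLM_apply, Matrix.add_mulVec]
  rw [this]
  exact norm_add_le (toCLM x) (toCLM y)

lemma matCNorm_mul_le (x y : Matrix (Fin n) (Fin n) A) :
    matCNorm (x * y) ≤ matCNorm x * matCNorm y := by
  simp only [matCNorm_eq_opNorm]
  have : toCLM (x * y) = (toCLM x).comp (toCLM y) := by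
    ext b
    simp [toCLM_apply, Matrix.mulVec_mulVec]
  rw [this]
  exact ContinuousLinearMap.opNorm_comp_le _ _

lemma matCNorm_le_bound (x : Matrix (Fin n) (Fin n) A) {C : ℝ} (hC : 0 ≤ C)
    (h : ∀ b : C⋆ᵐᵒᵈ(A, Fin n → A), ‖toCLM x b‖ ≤ C * ‖b‖) : matCNorm x ≤ C := by
  rw [matCNorm_eq_opNorm]
  exact ContinuousLinearMap.opNorm_le_bound _ hC h

lemma matCNorm_zero : matCNorm (0 : Matrix (Fin n) (Fin n) A) = 0 := by
  rw [matCNorm_eq_opNorm]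
  have : toCLM (0 : Matrix (Fin n) (Fin n) A) = 0 := by
    ext b
    simp [toCLM_apply, Matrix.zero_mulVec]
  rw [this]
  exact norm_zero (E := (C⋆ᵐᵒᵈ(A, Fin n → A)) →L[ℂ] (C⋆ᵐᵒᵈ(A, Fin n → A)))

/-- Norm bound for diagonal 2×2 matrices. -/
lemma matCNorm_diag_le (p q : A) {C : ℝ} (hp : ‖p‖ ≤ C) (hq : ‖q‖ ≤ C) :
    matCNorm !![p, 0; 0, q] ≤ C := by
  have hC : 0 ≤ C := le_trans (norm_nonneg _) hp
  refine matCNorm_le_bound _ hC fun b => ?_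
  set v : Fin 2 → A := star (linearEquiv ℂ A (Fin 2 → A) b) with hv
  have hmv : (!![p, 0; 0, q]).mulVec v = ![p * v 0, q * v 1] := by
    funext j
    fin_cases j <;>
      simp [Matrix.mulVec, dotProduct, Fin.sum_univ_two, Matrix.vecHead, Matrix.vecTail]
  have key : ∑ j, star ((!![p, 0; 0, q]).mulVec v j) * (!![p, 0; 0, q]).mulVec v j
      ≤ (C^2 : ℝ) • ∑ j, star (v j) * v j := by
    rw [hmv]
    rw [Fin.sum_univ_two, Fin.sum_univ_two]
    simp only [Matrix.cons_val_zero, Matrix.cons_val_one, Matrix.head_cons]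
    have h1 : star (p * v 0) * (p * v 0) ≤ (C^2 : ℝ) • (star (v 0) * v 0) := by
      have := CStarAlgebra.star_left_conjugate_le_norm_smul (a := v 0) (b := star p * p)
        (IsSelfAdjoint.star_mul_self p)
      calc star (p * v 0) * (p * v 0) = star (v 0) * (star p * p) * v 0 := by
            simp [star_mul, mul_assoc]
        _ ≤ ‖star p * p‖ • (star (v 0) * v 0) := this
        _ ≤ (C^2 : ℝ) • (star (v 0) * v 0) := by
            refine smul_le_smul_of_nonneg_right ?_ (star_mul_self_nonneg _)
            rw [CStarRing.norm_star_mul_self]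
            nlinarith [norm_nonneg p]
    have h2 : star (q * v 1) * (q * v 1) ≤ (C^2 : ℝ) • (star (v 1) * v 1) := by
      have := CStarAlgebra.star_left_conjugate_le_norm_smul (a := v 1) (b := star q * q)
        (IsSelfAdjoint.star_mul_self q)
      calc star (q * v 1) * (q * v 1) = star (v 1) * (star q * q) * v 1 := by
            simp [star_mul, mul_assoc]
        _ ≤ ‖star q * q‖ • (star (v 1) * v 1) := this
        _ ≤ (C^2 : ℝ) • (star (v 1) * v 1) := by
            refine smul_le_smul_of_nonneg_right ?_ (star_mul_self_nonneg _)
            rw [CStarRing.norm_star_mul_self]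
            nlinarith [norm_nonneg q]
    rw [smul_add]
    exact add_le_add h1 h2
  have hpos : (0:A) ≤ ∑ j, star ((!![p, 0; 0, q]).mulVec v j) * (!![p, 0; 0, q]).mulVec v j :=
    Finset.sum_nonneg fun j _ => star_mul_self_nonneg _
  have hnorm := CStarAlgebra.norm_le_norm_of_nonneg_of_le hpos key
  have hsmul : ‖(C^2 : ℝ) • ∑ j, star (v j) * v j‖ = C^2 * ‖∑ j, star (v j) * v j‖ := by
    rw [norm_smul]
    simp [abs_of_nonneg (sq_nonneg C)]
  rw [hsmul] at hnorm
  have hb' : ‖b‖ = Real.sqrt ‖∑ j, star (v j) * v j‖ := norm_eq_star b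
  have hb2 : ‖∑ j, star (v j) * v j‖ = ‖b‖^2 := by
    rw [hb', Real.sq_sqrt (norm_nonneg _)]
  calc ‖toCLM !![p, 0; 0, q] b‖
      = Real.sqrt ‖∑ j, star ((!![p, 0; 0, q]).mulVec v j) * (!![p, 0; 0, q]).mulVec v j‖ :=
        norm_symm_eq _
    _ ≤ Real.sqrt (C^2 * ‖∑ j, star (v j) * v j‖) := Real.sqrt_le_sqrt hnorm
    _ = Real.sqrt ((C * ‖b‖)^2) := by rw [hb2]; ring_nf
    _ = C * ‖b‖ := Real.sqrt_sq (by positivity)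

/-- Scalar matrices satisfying `Mᴴ * M = 1` act isometrically, hence have `matCNorm ≤ 1`. -/
lemma matCNorm_scalar_le (M : Matrix (Fin n) (Fin n) ℂ) (hM : Mᴴ * M = 1) :
    matCNorm (M.map (algebraMap ℂ A)) ≤ 1 := by
  refine matCNorm_le_bound _ zero_le_one fun b => ?_
  set v : Fin n → A := star (linearEquiv ℂ A (Fin n → A) b) with hv
  have hXv : ∀ j, (M.map (algebraMap ℂ A)).mulVec v j = ∑ k, M j k • v k := by
    intro j
    simp [Matrix.mulVec, dotProduct, Matrix.map_apply, Algebra.smul_def]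
  have key : ∑ j, star ((M.map (algebraMap ℂ A)).mulVec v j) *
      (M.map (algebraMap ℂ A)).mulVec v j = ∑ k, star (v k) * v k := by
    calc ∑ j, star ((M.map (algebraMap ℂ A)).mulVec v j) *
          (M.map (algebraMap ℂ A)).mulVec v j
        = ∑ j, ∑ k, ∑ l, (star (M j k) * M j l) • (star (v k) * v l) := by
          refine Finset.sum_congr rfl fun j _ => ?_
          rw [hXv j, star_sum, Finset.sum_mul]
          refine Finset.sum_congr rfl fun k _ => ?_
          rw [Finset.mul_sum]
          refine Finset.sum_congr rfl fun l _ => ?_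
          rw [star_smul, smul_mul_smul_comm]
      _ = ∑ k, ∑ l, (∑ j, star (M j k) * M j l) • (star (v k) * v l) := by
          rw [Finset.sum_comm]
          refine Finset.sum_congr rfl fun k _ => ?_
          rw [Finset.sum_comm]
          refine Finset.sum_congr rfl fun l _ => ?_
          rw [Finset.sum_smul]
      _ = ∑ k, ∑ l, ((Mᴴ * M) k l) • (star (v k) * v l) := by
          simp [Matrix.mul_apply, Matrix.conjTranspose_apply]
      _ = ∑ k, star (v k) * v k := by
          rw [hM]
          simp [Matrix.one_apply, ite_smul]
  have hb' : ‖b‖ = Real.sqrt ‖∑ j, star (v j) * v j‖ := norm_eq_star b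
  calc ‖toCLM (M.map (algebraMap ℂ A)) b‖
      = Real.sqrt ‖∑ j, star ((M.map (algebraMap ℂ A)).mulVec v j) *
          (M.map (algebraMap ℂ A)).mulVec v j‖ := norm_symm_eq _
    _ = ‖b‖ := by rw [key, hb']
    _ ≤ 1 * ‖b‖ := le_of_eq (one_mul _).symm

lemma matCNorm_mul_mul_le (x y z : Matrix (Fin n) (Fin n) A) {cx cy cz : ℝ}
    (hx : matCNorm x ≤ cx) (hy : matCNorm y ≤ cy) (hz : matCNorm z ≤ cz)
    (hcx : 0 ≤ cx) (hcy : 0 ≤ cy) (hcz : 0 ≤ cz) :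
    matCNorm (x * y * z) ≤ cx * cy * cz := by
  calc matCNorm (x * y * z) ≤ matCNorm (x * y) * matCNorm z := matCNorm_mul_le _ _
    _ ≤ (cx * cy) * cz := by
        refine mul_le_mul ?_ hz (matCNorm_nonneg _) (by positivity)
        calc matCNorm (x * y) ≤ matCNorm x * matCNorm y := matCNorm_mul_le _ _
          _ ≤ cx * cy := mul_le_mul hx hy (matCNorm_nonneg _) hcx

lemma star_map_algebraMap (M : Matrix (Fin n) (Fin n) ℂ) :
    star (M.map (algebraMap ℂ A)) = (Mᴴ).map (algebraMap ℂ A) := by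
  ext i j
  simp [Matrix.star_apply, Matrix.map_apply, Matrix.conjTranspose_apply,
    ← algebraMap_star_comm]

section RingId
variable {M : Type*} [Ring M] [StarRing M]

/-- `star w * w - 1` decomposition for `w = p * (r * dd * r')`. -/
lemma key_id1 (r r' p dd du da dB : M)
    (hr1 : r * r' = 1) (hr2 : r' * r = 1)
    (hsq : star (r * dd * r') = r * du * r')
    (hpp : star p * p = 1 + dB)
    (hdd : du * dd = 1 + da) :
    star (p * (r * dd * r')) * (p * (r * dd * r')) - 1 =
      r * da * r' + star (r * dd * r') * dB * (r * dd * r') := by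
  have hQQ : star (r * dd * r') * (r * dd * r') = 1 + r * da * r' := by
    rw [hsq]
    have h1 : (r * du * r') * (r * dd * r') = r * (du * (r' * r) * dd) * r' := by
      noncomm_ring
    rw [h1, hr2, mul_one, hdd]
    have h2 : r * (1 + da) * r' = r * r' + r * da * r' := by noncomm_ring
    rw [h2, hr1]
  have h3 : star (p * (r * dd * r')) * (p * (r * dd * r')) =
      star (r * dd * r') * (star p * p) * (r * dd * r') := by
    rw [star_mul]
    noncomm_ring
  rw [h3, hpp]
  have h4 : star (r * dd * r') * (1 + dB) * (r * dd * r') =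
      star (r * dd * r') * (r * dd * r') + star (r * dd * r') * dB * (r * dd * r') := by
    noncomm_ring
  rw [h4, hQQ]
  noncomm_ring

/-- `w * star w - 1` decomposition for `w = p * (r * dd * r')`. -/
lemma key_id2 (r r' p dd du db dA : M)
    (hr1 : r * r' = 1) (hr2 : r' * r = 1)
    (hsq : star (r * dd * r') = r * du * r')
    (hpp : p * star p = 1 + dA)
    (hdd : dd * du = 1 + db) :
    (p * (r * dd * r')) * star (p * (r * dd * r')) - 1 =
      dA + p * (r * db * r') * star p := by
  have hQQ : (r * dd * r') * star (r * dd * r') = 1 + r * db * r' := by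
    rw [hsq]
    have h1 : (r * dd * r') * (r * du * r') = r * (dd * (r' * r) * du) * r' := by
      noncomm_ring
    rw [h1, hr2, mul_one, hdd]
    have h2 : r * (1 + db) * r' = r * r' + r * db * r' := by noncomm_ring
    rw [h2, hr1]
  have h3 : (p * (r * dd * r')) * star (p * (r * dd * r')) =
      p * ((r * dd * r') * star (r * dd * r')) * star p := by
    rw [star_mul]
    noncomm_ring
  rw [h3, hQQ]
  have h4 : p * (1 + r * db * r') * star p =
      p * star p + p * (r * db * r') * star p := by noncomm_ring
  rw [h4, hpp]
  noncomm_ring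

end RingId

section Path

variable (A) in
/-- The rotation matrix with angle `π t`. -/
noncomputable def RM (t : ℝ) : Matrix (Fin 2) (Fin 2) ℂ :=
  !![(Real.cos (Real.pi * t) : ℂ), -(Real.sin (Real.pi * t) : ℂ);
     (Real.sin (Real.pi * t) : ℂ), (Real.cos (Real.pi * t) : ℂ)]

variable (A) in
noncomputable def RA (t : ℝ) : Matrix (Fin 2) (Fin 2) A := (RM t).map (algebraMap ℂ A)

variable (A) in
noncomputable def RA' (t : ℝ) : Matrix (Fin 2) (Fin 2) A := ((RM t)ᴴ).map (algebraMap ℂ A)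

/-- diag(1, y) -/
def DU (y : A) : Matrix (Fin 2) (Fin 2) A := !![(1 : A), 0; 0, y]

/-- diag(x, 1) -/
def PU (x : A) : Matrix (Fin 2) (Fin 2) A := !![x, 0; 0, (1 : A)]

noncomputable def seg1 (u : A) (t : ℝ) : Matrix (Fin 2) (Fin 2) A :=
  PU u * (RA A t * DU (star u) * RA' A t)

noncomputable def seg2 (u : A) (t : ℝ) : Matrix (Fin 2) (Fin 2) A :=
  !![(1 : A) + ((2 - 2 * t : ℝ) : ℂ) • (u * star u - 1), 0; 0, (1 : A)]

noncomputable def homo (u : A) (t : ℝ) : Matrix (Fin 2) (Fin 2) A :=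
  if t ≤ (1 : ℝ) / 2 then seg1 u t else seg2 u t

lemma rot_unitary (c s : ℝ) (hcs : s ^ 2 + c ^ 2 = 1) :
    (!![(c : ℂ), -(s : ℂ); (s : ℂ), (c : ℂ)])ᴴ * !![(c : ℂ), -(s : ℂ); (s : ℂ), (c : ℂ)] = 1 ∧
    !![(c : ℂ), -(s : ℂ); (s : ℂ), (c : ℂ)] * (!![(c : ℂ), -(s : ℂ); (s : ℂ), (c : ℂ)])ᴴ = 1 := by
  constructor <;>
  · ext i j
    fin_cases i <;> fin_cases j <;>
      simp [Matrix.mul_apply, Fin.sum_univ_two, Matrix.conjTranspose_apply,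
        Matrix.one_apply, Complex.conj_ofReal] <;>
      · norm_cast
        nlinarith [hcs]

lemma RM_unitary (t : ℝ) : (RM t)ᴴ * RM t = 1 ∧ RM t * (RM t)ᴴ = 1 := by
  rw [RM]
  exact rot_unitary _ _ (Real.sin_sq_add_cos_sq (Real.pi * t))

lemma RA_mul_RA' (t : ℝ) : RA A t * RA' A t = 1 := by
  rw [RA, RA', ← Matrix.map_mul, (RM_unitary t).2]
  exact Matrix.map_one _ (map_zero _) (map_one _)

lemma RA'_mul_RA (t : ℝ) : RA' A t * RA A t = 1 := by
  rw [RA, RA', ← Matrix.map_mul, (RM_unitary t).1]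
  exact Matrix.map_one _ (map_zero _) (map_one _)

lemma star_RA (t : ℝ) : star (RA A t) = RA' A t := star_map_algebraMap _

lemma star_RA' (t : ℝ) : star (RA' A t) = RA A t := by
  rw [RA', star_map_algebraMap, Matrix.conjTranspose_conjTranspose, RA]

lemma matCNorm_RA_le (t : ℝ) : matCNorm (RA A t) ≤ 1 :=
  matCNorm_scalar_le _ (RM_unitary t).1

lemma matCNorm_RA'_le (t : ℝ) : matCNorm (RA' A t) ≤ 1 := by
  refine matCNorm_scalar_le _ ?_
  rw [Matrix.conjTranspose_conjTranspose]
  exact (RM_unitary t).2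

lemma star_DU (y : A) : star (DU y) = DU (star y) := by
  ext i j
  fin_cases i <;> fin_cases j <;> simp [DU, Matrix.star_apply]

lemma star_PU (x : A) : star (PU x) = PU (star x) := by
  ext i j
  fin_cases i <;> fin_cases j <;> simp [PU, Matrix.star_apply]

lemma DU_mul_DU (x y : A) : DU x * DU y = DU (x * y) := by
  ext i j
  fin_cases i <;> fin_cases j <;> simp [DU, Matrix.mul_apply, Fin.sum_univ_two]

lemma PU_mul_PU (x y : A) : PU x * PU y = PU (x * y) := by
  ext i j
  fin_cases i <;> fin_cases j <;> simp [PU, Matrix.mul_apply, Fin.sum_univ_two]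

lemma DU_eq_one_add (y : A) : DU y = 1 + !![(0 : A), 0; 0, y - 1] := by
  ext i j
  fin_cases i <;> fin_cases j <;> simp [DU, Matrix.one_apply]

lemma PU_eq_one_add (x : A) : PU x = 1 + !![x - 1, (0 : A); 0, 0] := by
  ext i j
  fin_cases i <;> fin_cases j <;> simp [PU, Matrix.one_apply]

/-- star of the middle factor: `star (R t * DU (star u) * R' t) = R t * DU u * R' t`. -/
lemma star_mid (u : A) (t : ℝ) :
    star (RA A t * DU (star u) * RA' A t) = RA A t * DU u * RA' A t := by
  rw [star_mul, star_mul, star_RA, star_RA', star_DU, star_star]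
  rw [mul_assoc]

lemma norm_one_le' : ‖(1 : A)‖ ≤ 1 := by
  have h : ‖star (1 : A) * 1‖ = ‖(1 : A)‖ * ‖(1 : A)‖ := CStarRing.norm_star_mul_self
  simp only [star_one, one_mul] at h
  nlinarith [norm_nonneg (1 : A), h]

lemma matCNorm_DU_le (y : A) {C : ℝ} (h1 : (1:ℝ) ≤ C) (hy : ‖y‖ ≤ C) :
    matCNorm (DU y) ≤ C := by
  rw [DU]
  exact matCNorm_diag_le _ _ (norm_one_le'.trans h1) hy

lemma matCNorm_PU_le (x : A) {C : ℝ} (h1 : (1:ℝ) ≤ C) (hx : ‖x‖ ≤ C) :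
    matCNorm (PU x) ≤ C := by
  rw [PU]
  exact matCNorm_diag_le _ _ hx (norm_one_le'.trans h1)

lemma RA_zero : RA A 0 = 1 := by
  have : RM 0 = 1 := by
    ext i j
    fin_cases i <;> fin_cases j <;> simp [RM, Matrix.one_apply]
  rw [RA, this]
  exact Matrix.map_one _ (map_zero _) (map_one _)

lemma RA'_zero : RA' A 0 = 1 := by
  have : (RM 0)ᴴ = 1 := by
    ext i j
    fin_cases i <;> fin_cases j <;>
      simp [RM, Matrix.one_apply, Matrix.conjTranspose_apply]
  rw [RA', this]
  exact Matrix.map_one _ (map_zero _) (map_one _)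

lemma seg1_zero (u : A) : seg1 u 0 = !![u, 0; 0, star u] := by
  rw [seg1, RA_zero, RA'_zero, one_mul, mul_one]
  ext i j
  fin_cases i <;> fin_cases j <;> simp [PU, DU, Matrix.mul_apply, Fin.sum_univ_two]

lemma seg2_one (u : A) : seg2 u 1 = 1 := by
  rw [seg2]
  norm_num
  exact (Matrix.one_fin_two).symm

lemma seg1_half (u : A) : seg1 u (1 / 2) = seg2 u (1 / 2) := by
  have hc : Real.cos (Real.pi * (1 / 2)) = 0 := by
    rw [mul_one_div, Real.cos_pi_div_two]
  have hs : Real.sin (Real.pi * (1 / 2)) = 1 := by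
    rw [mul_one_div, Real.sin_pi_div_two]
  have hRM : RM (1 / 2) = !![(0 : ℂ), -1; 1, 0] := by
    rw [RM, hc, hs]
    norm_num
  have hRA : RA A (1 / 2) = !![(0 : A), -1; 1, 0] := by
    rw [RA, hRM]
    ext i j
    fin_cases i <;> fin_cases j <;> simp [Matrix.map_apply]
  have hRA' : RA' A (1 / 2) = !![(0 : A), 1; -1, 0] := by
    rw [RA', hRM]
    ext i j
    fin_cases i <;> fin_cases j <;> simp [Matrix.map_apply, Matrix.conjTranspose_apply]
  rw [seg1, seg2, hRA, hRA']
  norm_num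
  ext i j
  fin_cases i <;> fin_cases j <;>
    simp [PU, DU, Matrix.mul_apply, Fin.sum_univ_two] <;> abel

/-- First approximate-unitarity estimate on segment 1. -/
lemma seg1_norm1 (u : A) (t : ℝ) {m : ℝ} (h1m : 1 ≤ m) (hum : ‖u‖ ≤ m) :
    matCNorm (star (seg1 u t) * seg1 u t - 1) ≤
      ‖u * star u - 1‖ + m * ‖star u * u - 1‖ * m := by
  set a := u * star u - 1 with ha
  set b := star u * u - 1 with hb
  have hm0 : (0:ℝ) ≤ m := zero_le_one.trans h1m
  have hid := key_id1 (RA A t) (RA' A t) (PU u) (DU (star u)) (DU u)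
    (!![(0 : A), 0; 0, a]) (!![b, (0 : A); 0, 0])
    (RA_mul_RA' t) (RA'_mul_RA t) (star_mid u t)
    (by rw [star_PU, PU_mul_PU, PU_eq_one_add])
    (by rw [DU_mul_DU, DU_eq_one_add])
  rw [seg1, hid]
  have hmid : matCNorm (RA A t * DU (star u) * RA' A t) ≤ m := by
    have := matCNorm_mul_mul_le (RA A t) (DU (star u)) (RA' A t)
      (matCNorm_RA_le t) (matCNorm_DU_le (star u) h1m (by rwa [norm_star]))
      (matCNorm_RA'_le t) zero_le_one hm0 zero_le_one
    simpa using this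
  have hmid' : matCNorm (star (RA A t * DU (star u) * RA' A t)) ≤ m := by
    rw [star_mid]
    have := matCNorm_mul_mul_le (RA A t) (DU u) (RA' A t)
      (matCNorm_RA_le t) (matCNorm_DU_le u h1m hum)
      (matCNorm_RA'_le t) zero_le_one hm0 zero_le_one
    simpa using this
  calc matCNorm (RA A t * !![(0 : A), 0; 0, a] * RA' A t +
        star (RA A t * DU (star u) * RA' A t) * !![b, (0 : A); 0, 0] *
          (RA A t * DU (star u) * RA' A t))
      ≤ matCNorm (RA A t * !![(0 : A), 0; 0, a] * RA' A t) +
        matCNorm (star (RA A t * DU (star u) * RA' A t) * !![b, (0 : A); 0, 0] *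
          (RA A t * DU (star u) * RA' A t)) := matCNorm_add_le _ _
    _ ≤ 1 * ‖a‖ * 1 + m * ‖b‖ * m := by
        refine add_le_add ?_ ?_
        · exact matCNorm_mul_mul_le _ _ _ (matCNorm_RA_le t)
            (matCNorm_diag_le _ _ (by simp) le_rfl) (matCNorm_RA'_le t)
            zero_le_one (norm_nonneg _) zero_le_one
        · exact matCNorm_mul_mul_le _ _ _ hmid'
            (matCNorm_diag_le _ _ le_rfl (by simp)) hmid
            hm0 (norm_nonneg _) hm0
    _ = ‖a‖ + m * ‖b‖ * m := by ring

/-- Second approximate-unitarity estimate on segment 1. -/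
lemma seg1_norm2 (u : A) (t : ℝ) {m : ℝ} (h1m : 1 ≤ m) (hum : ‖u‖ ≤ m) :
    matCNorm (seg1 u t * star (seg1 u t) - 1) ≤
      ‖u * star u - 1‖ + m * ‖star u * u - 1‖ * m := by
  set a := u * star u - 1 with ha
  set b := star u * u - 1 with hb
  have hm0 : (0:ℝ) ≤ m := zero_le_one.trans h1m
  have hid := key_id2 (RA A t) (RA' A t) (PU u) (DU (star u)) (DU u)
    (!![(0 : A), 0; 0, b]) (!![a, (0 : A); 0, 0])
    (RA_mul_RA' t) (RA'_mul_RA t) (star_mid u t)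
    (by rw [star_PU, PU_mul_PU, PU_eq_one_add])
    (by rw [DU_mul_DU, DU_eq_one_add])
  rw [seg1, hid]
  have hPb : matCNorm (RA A t * !![(0 : A), 0; 0, b] * RA' A t) ≤ ‖b‖ := by
    have := matCNorm_mul_mul_le (RA A t) (!![(0 : A), 0; 0, b]) (RA' A t)
      (matCNorm_RA_le t) (matCNorm_diag_le _ _ (by simp) le_rfl)
      (matCNorm_RA'_le t) zero_le_one (norm_nonneg _) zero_le_one
    simpa using this
  calc matCNorm (!![a, (0 : A); 0, 0] +
        PU u * (RA A t * !![(0 : A), 0; 0, b] * RA' A t) * star (PU u))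
      ≤ matCNorm (!![a, (0 : A); 0, 0]) +
        matCNorm (PU u * (RA A t * !![(0 : A), 0; 0, b] * RA' A t) * star (PU u)) :=
        matCNorm_add_le _ _
    _ ≤ ‖a‖ + m * ‖b‖ * m := by
        refine add_le_add (matCNorm_diag_le _ _ le_rfl (by simp)) ?_
        refine matCNorm_mul_mul_le _ _ _ (matCNorm_PU_le u h1m hum) hPb ?_
          hm0 (norm_nonneg _) hm0
        rw [star_PU]
        exact matCNorm_PU_le _ h1m (by rwa [norm_star])

lemma seg2_star (u : A) (t : ℝ) : star (seg2 u t) = seg2 u t := by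
  have hsa : star (u * star u - 1) = u * star u - 1 := by
    simp [star_sub, star_mul]
  ext i j
  fin_cases i <;> fin_cases j <;>
    simp [seg2, Matrix.star_apply, star_smul, Complex.conj_ofReal, hsa]

lemma seg2_norm (u : A) (t : ℝ) (h0 : 0 ≤ 2 - 2 * t) (h1 : 2 - 2 * t ≤ 1) :
    matCNorm (star (seg2 u t) * seg2 u t - 1) ≤
      2 * ‖u * star u - 1‖ + ‖u * star u - 1‖ * ‖u * star u - 1‖ := by
  set a := u * star u - 1 with ha
  set y : A := ((2 - 2 * t : ℝ) : ℂ) • a with hy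
  have hyn : ‖y‖ ≤ ‖a‖ := by
    rw [hy, norm_smul]
    have hc1 : ‖((2 - 2 * t : ℝ) : ℂ)‖ ≤ 1 := by
      rw [Complex.norm_real, Real.norm_eq_abs, abs_of_nonneg h0]
      exact h1
    nlinarith [norm_nonneg a, norm_nonneg ((2 - 2 * t : ℝ) : ℂ)]
  rw [seg2_star]
  have hmul : seg2 u t * seg2 u t - 1 = !![y + y + y * y, (0:A); 0, 0] := by
    have hent : ((1:A) + y) * ((1:A) + y) - 1 = y + y + y * y := by noncomm_ring
    ext i j
    fin_cases i <;> fin_cases j <;>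
      simp [seg2, Matrix.mul_apply, Fin.sum_univ_two, Matrix.one_apply] <;>
    · rw [show ((2:ℂ) - 2 * (t:ℂ)) • (u * star u - 1) = y by rw [hy]; norm_cast]
      exact hent
  rw [hmul]
  refine (matCNorm_diag_le _ _ le_rfl (by simp)).trans ?_
  calc ‖y + y + y * y‖ ≤ ‖y‖ + ‖y‖ + ‖y‖ * ‖y‖ := by
        refine (norm_add_le _ _).trans ?_
        refine add_le_add ((norm_add_le _ _).trans ?_) (norm_mul_le _ _)
        exact le_rfl
    _ ≤ 2 * ‖a‖ + ‖a‖ * ‖a‖ := by nlinarith [norm_nonneg y, norm_nonneg a, hyn]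

lemma continuous_RA : Continuous (RA A) := by
  have hc : Continuous fun t : ℝ => ((Real.cos (Real.pi * t) : ℂ)) :=
    Complex.continuous_ofReal.comp (Real.continuous_cos.comp (continuous_const.mul continuous_id))
  have hs : Continuous fun t : ℝ => ((Real.sin (Real.pi * t) : ℂ)) :=
    Complex.continuous_ofReal.comp (Real.continuous_sin.comp (continuous_const.mul continuous_id))
  have halg : Continuous (algebraMap ℂ A) := continuous_algebraMap ℂ A
  apply continuous_matrix
  intro i j
  fin_cases i <;> fin_cases j <;>
    simp only [RA, RM, Matrix.map_apply, Matrix.cons_val', Matrix.cons_val_zero,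
      Matrix.cons_val_one, Matrix.head_cons, Matrix.empty_val', Matrix.cons_val_fin_one,
      Matrix.head_fin_const]
  · exact halg.comp hc
  · exact halg.comp hs.neg
  · exact halg.comp hs
  · exact halg.comp hc

lemma rot_conjTranspose (c s : ℝ) :
    (!![(c : ℂ), -(s : ℂ); (s : ℂ), (c : ℂ)])ᴴ = !![(c : ℂ), (s : ℂ); -(s : ℂ), (c : ℂ)] := by
  ext i j
  fin_cases i <;> fin_cases j <;>
    simp [Matrix.conjTranspose_apply, Complex.conj_ofReal]

lemma RM_conjTranspose (t : ℝ) : (RM t)ᴴ =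
    !![(Real.cos (Real.pi * t) : ℂ), (Real.sin (Real.pi * t) : ℂ);
       -(Real.sin (Real.pi * t) : ℂ), (Real.cos (Real.pi * t) : ℂ)] := by
  rw [RM]
  exact rot_conjTranspose _ _

lemma continuous_RA' : Continuous (RA' A) := by
  have hc : Continuous fun t : ℝ => ((Real.cos (Real.pi * t) : ℂ)) :=
    Complex.continuous_ofReal.comp (Real.continuous_cos.comp (continuous_const.mul continuous_id))
  have hs : Continuous fun t : ℝ => ((Real.sin (Real.pi * t) : ℂ)) :=
    Complex.continuous_ofReal.comp (Real.continuous_sin.comp (continuous_const.mul continuous_id))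
  have halg : Continuous (algebraMap ℂ A) := continuous_algebraMap ℂ A
  apply continuous_matrix
  intro i j
  fin_cases i <;> fin_cases j <;>
    simp only [RA', RM_conjTranspose, Matrix.map_apply, Matrix.cons_val',
      Matrix.cons_val_zero, Matrix.cons_val_one, Matrix.head_cons, Matrix.empty_val',
      Matrix.cons_val_fin_one, Matrix.head_fin_const]
  · exact halg.comp hc
  · exact halg.comp hs
  · exact halg.comp hs.neg
  · exact halg.comp hc

lemma continuous_seg1 (u : A) : Continuous (seg1 u) := by
  unfold seg1
  exact continuous_const.matrix_mul
    ((continuous_RA.matrix_mul continuous_const).matrix_mul continuous_RA')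

lemma continuous_seg2 (u : A) : Continuous (seg2 u) := by
  unfold seg2
  apply continuous_matrix
  intro i j
  have h1 : Continuous fun t : ℝ => (1 : A) + ((2 - 2 * t : ℝ) : ℂ) • (u * star u - 1) := by
    refine continuous_const.add (Continuous.smul ?_ continuous_const)
    exact Complex.continuous_ofReal.comp (by continuity)
  fin_cases i <;> fin_cases j <;>
    simp only [Matrix.cons_val', Matrix.cons_val_zero, Matrix.cons_val_one, Matrix.head_cons,
      Matrix.empty_val', Matrix.cons_val_fin_one, Matrix.head_fin_const]
  · exact h1
  · exact continuous_const
  · exact continuous_const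
  · exact continuous_const

section Membership

variable {ℰ : Type*} [AddCommSemigroup ℰ] [Lattice ℰ]

lemma mem_matmul (Φ : CoarseFiltration ℰ A) (E1 E2 : ℰ) (X Y : Matrix (Fin 2) (Fin 2) A)
    (hX : ∀ i j, X i j ∈ Φ.F E1) (hY : ∀ i j, Y i j ∈ Φ.F E2) :
    ∀ i j, (X * Y) i j ∈ Φ.F (E1 + E2) := by
  intro i j
  rw [Matrix.mul_apply]
  exact Submodule.sum_mem _ fun k _ => Φ.mul_mem _ _ _ _ (hX i k) (hY k j)

lemma mem_scalar_left (Φ : CoarseFiltration ℰ A) (E' : ℰ) (M : Matrix (Fin 2) (Fin 2) ℂ)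
    (X : Matrix (Fin 2) (Fin 2) A) (hX : ∀ i j, X i j ∈ Φ.F E') :
    ∀ i j, ((M.map (algebraMap ℂ A)) * X) i j ∈ Φ.F E' := by
  intro i j
  rw [Matrix.mul_apply]
  refine Submodule.sum_mem _ fun k _ => ?_
  rw [Matrix.map_apply, ← Algebra.smul_def]
  exact Submodule.smul_mem _ _ (hX k j)

lemma mem_scalar_right (Φ : CoarseFiltration ℰ A) (E' : ℰ) (M : Matrix (Fin 2) (Fin 2) ℂ)
    (X : Matrix (Fin 2) (Fin 2) A) (hX : ∀ i j, X i j ∈ Φ.F E') :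
    ∀ i j, (X * (M.map (algebraMap ℂ A))) i j ∈ Φ.F E' := by
  intro i j
  rw [Matrix.mul_apply]
  refine Submodule.sum_mem _ fun k _ => ?_
  rw [Matrix.map_apply, ← Algebra.commutes, ← Algebra.smul_def]
  exact Submodule.smul_mem _ _ (hX i k)

end Membership

end Path

end Stmt8Aux

open Stmt8Aux

/-- Let `ℰ` be a coarse structure (a lattice-ordered abelian semigroup
with monotone addition), `A` a unital `ℰ`-filtered C*-algebra, `0 < ε < 1/12` and
`E ∈ ℰ`. If `u` is an `ε`-`E`-unitary in `A`, then `diag(u, u*)` and `I₂` are homotopic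
as `3ε`-`2E`-unitaries in `M₂(A)` (matrix algebras being equipped with their unique
C*-norm `matCNorm`). -/
theorem stmt_8 {ℰ : Type*} [AddCommSemigroup ℰ] [Lattice ℰ]
    [CovariantClass ℰ ℰ (· + ·) (· ≤ ·)]
    [CovariantClass ℰ ℰ (Function.swap (· + ·)) (· ≤ ·)]
    {A : Type*} [CStarAlgebra A] (Φ : CoarseFiltration ℰ A)
    (ε : ℝ) (hε0 : 0 < ε) (hε : ε < 1 / 12) (E : ℰ)
    (u : A)
    (huF : u ∈ Φ.F E) (hu1 : ‖star u * u - 1‖ < ε) (hu2 : ‖u * star u - 1‖ < ε) :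
    ∃ w : ℝ → Matrix (Fin 2) (Fin 2) A,
      ContinuousOn w (Set.Icc 0 1) ∧
      w 0 = !![u, 0; 0, star u] ∧ w 1 = 1 ∧
      ∀ t ∈ Set.Icc (0 : ℝ) 1,
        (∀ i j, w t i j ∈ Φ.F (E + E)) ∧
        matCNorm (star (w t) * w t - 1) < 3 * ε ∧
        matCNorm (w t * star (w t) - 1) < 3 * ε := by
  classical
  -- basic norm facts
  have hns : ‖u‖ * ‖u‖ ≤ 1 + ε := by
    have h := CStarRing.norm_star_mul_self (x := u)
    have h2 : ‖star u * u‖ ≤ 1 + ε := by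
      calc ‖star u * u‖ = ‖(star u * u - 1) + 1‖ := by rw [sub_add_cancel]
        _ ≤ ‖star u * u - 1‖ + ‖(1:A)‖ := norm_add_le _ _
        _ ≤ ε + 1 := add_le_add hu1.le Stmt8Aux.norm_one_le'
        _ = 1 + ε := by ring
    linarith [h ▸ h2]
  set m : ℝ := max 1 ‖u‖ with hmdef
  have h1m : 1 ≤ m := le_max_left _ _
  have hum : ‖u‖ ≤ m := le_max_right _ _
  have hm2 : m * m ≤ 1 + ε := by
    rcases le_total ‖u‖ 1 with h | h
    · have hm1 : m = 1 := max_eq_left h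
      rw [hm1]; nlinarith
    · have hm1 : m = ‖u‖ := max_eq_right h
      rw [hm1]; exact hns
  refine ⟨homo u, ?_, ?_, ?_, ?_⟩
  · -- continuity
    refine Continuous.continuousOn ?_
    unfold Stmt8Aux.homo
    exact Continuous.if_le (continuous_seg1 u) (continuous_seg2 u)
      continuous_id continuous_const
      (fun t ht => by rw [ht]; exact seg1_half u)
  · rw [show Stmt8Aux.homo u 0 = seg1 u 0 from if_pos (by norm_num), seg1_zero]
  · rw [show Stmt8Aux.homo u 1 = seg2 u 1 from if_neg (by norm_num), seg2_one]
  · intro t ht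
    obtain ⟨ht0, ht1⟩ := ht
    by_cases hhalf : t ≤ 1 / 2
    · have hw : Stmt8Aux.homo u t = seg1 u t := if_pos hhalf
      rw [hw]
      have hbound : ‖u * star u - 1‖ + m * ‖star u * u - 1‖ * m < 3 * ε := by
        nlinarith [norm_nonneg (star u * u - 1), norm_nonneg (u * star u - 1),
          mul_le_mul_of_nonneg_left hm2 (norm_nonneg (star u * u - 1))]
      refine ⟨?_, lt_of_le_of_lt (seg1_norm1 u t h1m hum) hbound,
        lt_of_le_of_lt (seg1_norm2 u t h1m hum) hbound⟩
      -- membership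
      rw [Stmt8Aux.seg1]
      refine mem_matmul Φ E E _ _ ?_ ?_
      · intro i j
        fin_cases i <;> fin_cases j <;> simp [Stmt8Aux.PU]
        · exact huF
        · exact Φ.one_mem E
      · intro i j
        refine mem_scalar_right Φ E _ _ ?_ i j
        intro i j
        refine mem_scalar_left Φ E _ _ ?_ i j
        intro i j
        fin_cases i <;> fin_cases j <;> simp [Stmt8Aux.DU]
        · exact Φ.one_mem E
        · exact Φ.star_mem E u huF
    · have hw : Stmt8Aux.homo u t = seg2 u t := if_neg hhalf
      rw [hw]
      push_neg at hhalf
      have h0 : 0 ≤ 2 - 2 * t := by linarith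
      have h1' : 2 - 2 * t ≤ 1 := by linarith
      have hseg2 := seg2_norm u t h0 h1'
      have hbound : 2 * ‖u * star u - 1‖ + ‖u * star u - 1‖ * ‖u * star u - 1‖ < 3 * ε := by
        nlinarith [norm_nonneg (u * star u - 1)]
      have hflip : seg2 u t * star (seg2 u t) - 1 = star (seg2 u t) * seg2 u t - 1 := by
        rw [seg2_star]
      refine ⟨?_, lt_of_le_of_lt hseg2 hbound, by rw [hflip]; exact lt_of_le_of_lt hseg2 hbound⟩
      intro i j
      have haF : u * star u - 1 ∈ Φ.F (E + E) :=
        Submodule.sub_mem _ (Φ.mul_mem E E u (star u) huF (Φ.star_mem E u huF))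
          (Φ.one_mem (E + E))
      fin_cases i <;> fin_cases j <;> simp [Stmt8Aux.seg2]
      · refine Submodule.add_mem _ (Φ.one_mem (E + E)) ?_
        have := Submodule.smul_mem (Φ.F (E + E)) ((2 - 2 * t : ℝ) : ℂ) haF
        convert this using 2
        push_cast
        ring
      · exact Φ.one_mem (E + E)
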